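/- arXiv:2603.10848 — 2 statements merged into one kernel-verified Lean document; each statement's English description precedes it below -/
import Mathlib

section
/- The bias of the adaptive fused estimator μ̂* = ŵ·v̄ + (1−ŵ)·V equals −E[(1−ŵ)(v̄ − V)], and since the pointwise bound |(1−ŵ)(v̄ − V)| ≤ 1/√k holds, |E[μ̂*] − μ| ≤ 1/√k. -/
open MeasureTheory

lemma aux_ptwise (c d : ℝ) (hc : 0 < c) :
    |(1 - max 0 (d ^ 2 - c) / (max 0 (d ^ 2 - c) + c)) * d| ≤ Real.sqrt c := by
  have hΔ : 0 ≤ max 0 (d ^ 2 - c) := le_max_left _ _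
  have hden : 0 < max 0 (d ^ 2 - c) + c := by linarith
  have h1 : 1 - max 0 (d ^ 2 - c) / (max 0 (d ^ 2 - c) + c) = c / (max 0 (d ^ 2 - c) + c) := by
    field_simp
    ring
  rw [h1]
  by_cases hcase : d ^ 2 ≤ c
  · have hΔ0 : max 0 (d ^ 2 - c) = 0 := max_eq_left (by linarith)
    rw [hΔ0]
    simp only [zero_add, div_self hc.ne', one_mul]
    rw [← Real.sqrt_sq_eq_abs]
    exact Real.sqrt_le_sqrt hcase
  · push_neg at hcase
    have hΔ0 : max 0 (d ^ 2 - c) = d ^ 2 - c := max_eq_right (by linarith)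
    rw [hΔ0]
    have hd2 : d ^ 2 - c + c = d ^ 2 := by ring
    rw [hd2]
    have hdpos : 0 < |d| := by
      rcases eq_or_ne d 0 with h | h
      · exfalso; rw [h] at hcase; simp at hcase; linarith
      · exact abs_pos.mpr h
    have hge : Real.sqrt c ≤ |d| := by
      rw [← Real.sqrt_sq hdpos.le]
      exact Real.sqrt_le_sqrt (by nlinarith [sq_abs d])
    have habs : |c / d ^ 2 * d| = c / |d| := by
      have hdne : d ≠ 0 := abs_pos.mp hdpos
      rw [abs_mul, abs_div, abs_pow, abs_of_nonneg hc.le, sq]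
      rw [div_mul_eq_mul_div, div_eq_div_iff (by positivity) hdpos.ne']
      rw [mul_comm (|d|) (|d|)]
      nlinarith [abs_mul_abs_self d]
    rw [habs, div_le_iff₀ hdpos]
    have hsc : 0 < Real.sqrt c := Real.sqrt_pos.mpr hc
    calc c = Real.sqrt c * Real.sqrt c := (Real.mul_self_sqrt hc.le).symm
    _ ≤ Real.sqrt c * |d| := by nlinarith

theorem adaptive_fused_estimator_bias_bound
    {Ω : Type*} [MeasurableSpace Ω] (P : Measure Ω) [IsProbabilityMeasure P]
    (k : ℕ) (hk : 1 ≤ k) (V μtrue : ℝ)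
    (v : Ω → ℝ) (hint : Integrable v P)
    (hmean : ∫ ω, v ω ∂P = μtrue) :
    |(∫ ω, (max 0 ((v ω - V) ^ 2 - 1 / (k : ℝ))
              / (max 0 ((v ω - V) ^ 2 - 1 / (k : ℝ)) + 1 / (k : ℝ)) * v ω
            + (1 - max 0 ((v ω - V) ^ 2 - 1 / (k : ℝ))
                  / (max 0 ((v ω - V) ^ 2 - 1 / (k : ℝ)) + 1 / (k : ℝ))) * V) ∂P)
        - μtrue| ≤ 1 / Real.sqrt k := by
  have hkpos : (0 : ℝ) < k := by exact_mod_cast hk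
  set c : ℝ := 1 / (k : ℝ) with hcdef
  have hc : 0 < c := by positivity
  set g : ℝ → ℝ := fun d => (1 - max 0 (d ^ 2 - c) / (max 0 (d ^ 2 - c) + c)) * d with hg
  have hden : ∀ d : ℝ, max 0 (d ^ 2 - c) + c ≠ 0 := by
    intro d
    have : 0 ≤ max 0 (d ^ 2 - c) := le_max_left _ _
    positivity
  have hgcont : Continuous g := by
    apply Continuous.mul _ continuous_id
    apply Continuous.sub continuous_const
    exact Continuous.div (continuous_const.max ((continuous_pow 2).sub continuous_const)) ((continuous_const.max ((continuous_pow 2).sub continuous_const)).add continuous_const) hden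
  have hvm : AEStronglyMeasurable (fun ω => v ω - V) P :=
    hint.aestronglyMeasurable.sub aestronglyMeasurable_const
  have hgint : Integrable (fun ω => g (v ω - V)) P := by
    refine ⟨hgcont.comp_aestronglyMeasurable hvm, ?_⟩
    apply HasFiniteIntegral.of_bounded (C := Real.sqrt c)
    exact ae_of_all _ fun ω => aux_ptwise c (v ω - V) hc
  have heq : (∫ ω, (max 0 ((v ω - V) ^ 2 - 1 / (k : ℝ))
              / (max 0 ((v ω - V) ^ 2 - 1 / (k : ℝ)) + 1 / (k : ℝ)) * v ω
            + (1 - max 0 ((v ω - V) ^ 2 - 1 / (k : ℝ))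
                  / (max 0 ((v ω - V) ^ 2 - 1 / (k : ℝ)) + 1 / (k : ℝ))) * V) ∂P)
      = ∫ ω, (v ω - g (v ω - V)) ∂P := by
    apply integral_congr_ae
    apply ae_of_all
    intro ω
    have hd := hden (v ω - V)
    simp only [hg, ← hcdef]
    field_simp
    ring
  rw [heq, integral_sub hint hgint, hmean]
  have hbnd : ‖∫ ω, g (v ω - V) ∂P‖ ≤ Real.sqrt c * (P Set.univ).toReal := by
    apply norm_integral_le_of_norm_le_const
    exact ae_of_all _ fun ω => aux_ptwise c (v ω - V) hc
  simp only [measure_univ, ENNReal.toReal_one, mul_one, Real.norm_eq_abs] at hbnd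
  have hsqrt : Real.sqrt c = 1 / Real.sqrt k := by
    rw [hcdef, one_div, one_div, Real.sqrt_inv]
  rw [← hsqrt]
  have hh : μtrue - (∫ ω, g (v ω - V) ∂P) - μtrue = -(∫ ω, g (v ω - V) ∂P) := by ring
  rw [hh, abs_neg]
  exact hbnd
end

section
/- With the decomposition above and the additional bound E[‖s‖²(r−μ)] ≤ L/2 in absolute value, one obtains E[‖ĝ‖²] ≤ Var_oracle + Φ·MSE(b) + L·|Bias(b)|, where Var_oracle = E[‖s‖²(r−μ)²], Φ = E[‖s‖²], MSE(b) = E[(b−μ)²], and Bias(b) = E[b] − μ. -/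
open MeasureTheory ProbabilityTheory

theorem policy_gradient_second_moment_bound
    {Ω : Type*} [MeasurableSpace Ω] (P : Measure Ω) [IsProbabilityMeasure P]
    (d : ℕ) (s : Ω → EuclideanSpace ℝ (Fin d)) (r b : Ω → ℝ) (μtrue L : ℝ)
    (hL : 0 ≤ L)
    (hindep : IndepFun b (fun ω => (s ω, r ω)) P)
    (hint_g : Integrable (fun ω => ‖(r ω - b ω) • s ω‖ ^ 2) P)
    (hint1 : Integrable (fun ω => ‖s ω‖ ^ 2 * (r ω - μtrue) ^ 2) P)
    (hint2 : Integrable (fun ω => ‖s ω‖ ^ 2) P)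
    (hint3 : Integrable (fun ω => (b ω - μtrue) ^ 2) P)
    (hint4 : Integrable (fun ω => ‖s ω‖ ^ 2 * (r ω - μtrue)) P)
    (hint5 : Integrable b P)
    (hcross : |∫ ω, ‖s ω‖ ^ 2 * (r ω - μtrue) ∂P| ≤ L / 2) :
    ∫ ω, ‖(r ω - b ω) • s ω‖ ^ 2 ∂P
      ≤ (∫ ω, ‖s ω‖ ^ 2 * (r ω - μtrue) ^ 2 ∂P)
        + (∫ ω, ‖s ω‖ ^ 2 ∂P) * (∫ ω, (b ω - μtrue) ^ 2 ∂P)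
        + L * |(∫ ω, b ω ∂P) - μtrue| := by
  set f : Ω → ℝ := fun ω => b ω - μtrue with hf
  set g : Ω → ℝ := fun ω => ‖s ω‖ ^ 2 * (r ω - μtrue) with hg
  have hφ : Measurable (fun x : ℝ => x - μtrue) := measurable_id.sub measurable_const
  have hψ : Measurable (fun p : EuclideanSpace ℝ (Fin d) × ℝ => ‖p.1‖ ^ 2 * (p.2 - μtrue)) := by
    fun_prop
  have hfg : IndepFun f g P := hindep.comp hφ hψ
  have hφ2 : Measurable fun x : ℝ => (x - μtrue) ^ 2 := by fun_prop
  have hψ2 : Measurable fun p : EuclideanSpace ℝ (Fin d) × ℝ => ‖p.1‖ ^ 2 := by fun_prop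
  have hfg2 : IndepFun (fun ω => f ω ^ 2) (fun ω => ‖s ω‖ ^ 2) P := hindep.comp hφ2 hψ2
  have hfint : Integrable f P := hint5.sub (integrable_const _)
  have hmul1 : Integrable (fun ω => f ω * g ω) P := hfg.integrable_mul hfint hint4
  have hmul2 : Integrable (fun ω => f ω ^ 2 * ‖s ω‖ ^ 2) P := hfg2.integrable_mul hint3 hint2
  have hpt : ∀ ω, ‖(r ω - b ω) • s ω‖ ^ 2
      = ‖s ω‖ ^ 2 * (r ω - μtrue) ^ 2 - 2 * (f ω * g ω) + f ω ^ 2 * ‖s ω‖ ^ 2 := by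
    intro ω
    rw [norm_smul, mul_pow, Real.norm_eq_abs, sq_abs]
    simp only [hf, hg]
    ring
  have hEint : ∫ ω, ‖(r ω - b ω) • s ω‖ ^ 2 ∂P
      = (∫ ω, ‖s ω‖ ^ 2 * (r ω - μtrue) ^ 2 ∂P)
        - 2 * ((∫ ω, f ω ∂P) * (∫ ω, g ω ∂P))
        + (∫ ω, f ω ^ 2 ∂P) * (∫ ω, ‖s ω‖ ^ 2 ∂P) := by
    calc ∫ ω, ‖(r ω - b ω) • s ω‖ ^ 2 ∂P
        = ∫ ω, (‖s ω‖ ^ 2 * (r ω - μtrue) ^ 2 - 2 * (f ω * g ω) + f ω ^ 2 * ‖s ω‖ ^ 2) ∂P := by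
          exact integral_congr_ae (Filter.Eventually.of_forall hpt)
      _ = (∫ ω, (‖s ω‖ ^ 2 * (r ω - μtrue) ^ 2 - 2 * (f ω * g ω)) ∂P)
            + ∫ ω, f ω ^ 2 * ‖s ω‖ ^ 2 ∂P := by
          exact integral_add (hint1.sub (hmul1.const_mul 2)) hmul2
      _ = (∫ ω, ‖s ω‖ ^ 2 * (r ω - μtrue) ^ 2 ∂P) - 2 * (∫ ω, f ω * g ω ∂P)
            + ∫ ω, f ω ^ 2 * ‖s ω‖ ^ 2 ∂P := by
          rw [integral_sub hint1 (hmul1.const_mul 2), integral_const_mul]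
      _ = _ := by
          rw [hfg.integral_fun_mul_eq_mul_integral hfint.aestronglyMeasurable hint4.aestronglyMeasurable,
            hfg2.integral_fun_mul_eq_mul_integral hint3.aestronglyMeasurable hint2.aestronglyMeasurable]
  have hB : ∫ ω, f ω ∂P = (∫ ω, b ω ∂P) - μtrue := by
    simp only [hf]
    rw [integral_sub hint5 (integrable_const _)]
    simp
  rw [hEint, hB]
  set B := (∫ ω, b ω ∂P) - μtrue
  set C := ∫ ω, g ω ∂P
  have h1 : C * B ≥ -|C * B| := neg_abs_le (C * B)
  have h2 : |C * B| = |C| * |B| := abs_mul C B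
  have h3 : ∫ ω, f ω ^ 2 ∂P = ∫ ω, (b ω - μtrue) ^ 2 ∂P := rfl
  rw [h3]
  nlinarith [abs_nonneg B, abs_nonneg C, neg_abs_le (C * B), abs_mul C B, hcross]
end
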